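/- arXiv:1805.04686 — 8 statements merged into one kernel-verified Lean document; each statement's English description precedes it below -/
import Mathlib

section
/- Let T be a nonempty finite type, p a probability mass function on T, and f : T → ℝ. Define the reweighted distribution p'(τ) = p(τ)·exp(f(τ)) / (Σ_σ p(σ)·exp(f(σ))). Then E_{p'}[f] ≥ E_p[f], i.e., Σ_τ p'(τ)·f(τ) ≥ Σ_τ p(τ)·f(τ). -/
open Real Finset

/-- Proposition 1: reweighting a pmf `p` by `exp(f)` does not decrease the expectation
of `f`. -/
theorem reweight_exp_improves_expectation
    (T : Type*) [Fintype T] [Nonempty T]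
    (p : T → ℝ) (hp0 : ∀ τ, 0 ≤ p τ) (hp1 : ∑ τ : T, p τ = 1)
    (f : T → ℝ)
    (p' : T → ℝ)
    (hp' : ∀ τ, p' τ = p τ * Real.exp (f τ) / (∑ σ : T, p σ * Real.exp (f σ))) :
    ∑ τ : T, p τ * f τ ≤ ∑ τ : T, p' τ * f τ := by
  set Z : ℝ := ∑ σ : T, p σ * Real.exp (f σ) with hZ
  set E : ℝ := ∑ τ : T, p τ * f τ with hE
  -- Z > 0
  have hZpos : 0 < Z := by
    obtain ⟨τ₀, hτ₀⟩ : ∃ τ, 0 < p τ := by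
      by_contra h
      push_neg at h
      have : ∑ τ : T, p τ = 0 := Finset.sum_eq_zero fun τ _ =>
        le_antisymm (h τ) (hp0 τ)
      simp [this] at hp1
    refine Finset.sum_pos' (fun σ _ => mul_nonneg (hp0 σ) (Real.exp_pos _).le)
      ⟨τ₀, Finset.mem_univ τ₀, mul_pos hτ₀ (Real.exp_pos _)⟩
  -- key nonnegativity
  have hkey : 0 ≤ ∑ τ : T, p τ * ((Real.exp (f τ) - Real.exp E) * (f τ - E)) := by
    refine Finset.sum_nonneg fun τ _ => mul_nonneg (hp0 τ) ?_
    rcases le_total (f τ) E with h | h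
    · have h1 : Real.exp (f τ) - Real.exp E ≤ 0 := by
        simpa using Real.exp_le_exp.2 h
      nlinarith
    · exact mul_nonneg (by simpa using Real.exp_le_exp.2 h) (by linarith)
  -- expand the key sum
  have hexpand : ∑ τ : T, p τ * ((Real.exp (f τ) - Real.exp E) * (f τ - E))
      = (∑ τ : T, p τ * Real.exp (f τ) * f τ) - E * Z := by
    have h1 : ∀ τ : T, p τ * ((Real.exp (f τ) - Real.exp E) * (f τ - E))
        = p τ * Real.exp (f τ) * f τ - E * (p τ * Real.exp (f τ))
          - Real.exp E * (p τ * f τ) + (Real.exp E * E) * p τ := by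
      intro τ; ring
    rw [Finset.sum_congr rfl fun τ _ => h1 τ]
    simp only [Finset.sum_add_distrib, Finset.sum_sub_distrib,
      ← Finset.mul_sum, ← hZ, ← hE, hp1]
    ring
  have hnum : E * Z ≤ ∑ τ : T, p τ * Real.exp (f τ) * f τ := by linarith
  have : ∑ τ : T, p' τ * f τ = (∑ τ : T, p τ * Real.exp (f τ) * f τ) / Z := by
    rw [Finset.sum_div]
    refine Finset.sum_congr rfl fun τ _ => ?_
    rw [hp' τ]; ring
  rw [this, le_div_iff₀ hZpos]
  linarith
end

section
/- Let T be a nonempty finite type, p a probability mass function on T, and f : T → ℝ. Define the reweighted distribution p'(τ) = p(τ)·exp(f(τ)) / (Σ_σ p(σ)·exp(f(σ))). Then E_{p'}[f] = E_p[f] if and only if f is constant on the support of p, i.e., if and only if there exists c ∈ ℝ such that f(τ) = c for every τ with p(τ) > 0. -/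
open Real Finset

/-- Strict version of Proposition 1: reweighting `p` by `exp(f)` leaves the expectation
of `f` unchanged iff `f` is constant on the support of `p`. -/
theorem reweight_exp_expectation_eq_iff_const_on_support
    (T : Type*) [Fintype T] [Nonempty T]
    (p : T → ℝ) (hp0 : ∀ τ, 0 ≤ p τ) (hp1 : ∑ τ : T, p τ = 1)
    (f : T → ℝ)
    (p' : T → ℝ)
    (hp' : ∀ τ, p' τ = p τ * Real.exp (f τ) / (∑ σ : T, p σ * Real.exp (f σ))) :
    (∑ τ : T, p' τ * f τ = ∑ τ : T, p τ * f τ) ↔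
      ∃ c : ℝ, ∀ τ, 0 < p τ → f τ = c := by
  classical
  have hex : ∃ τ, 0 < p τ := by
    by_contra h
    push_neg at h
    have : ∑ τ : T, p τ = 0 :=
      Finset.sum_eq_zero fun τ _ => le_antisymm (h τ) (hp0 τ)
    linarith
  obtain ⟨τ0, hτ0⟩ := hex
  have hZpos : 0 < ∑ σ : T, p σ * Real.exp (f σ) :=
    Finset.sum_pos' (fun τ _ => mul_nonneg (hp0 τ) (Real.exp_pos _).le)
      ⟨τ0, Finset.mem_univ τ0, mul_pos hτ0 (Real.exp_pos _)⟩
  set Z := ∑ σ : T, p σ * Real.exp (f σ) with hZdef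
  set B := ∑ τ : T, p τ * f τ with hBdef
  set C := ∑ τ : T, p τ * Real.exp (f τ) * f τ with hCdef
  have hL : ∑ τ : T, p' τ * f τ = C / Z := by
    rw [hCdef, Finset.sum_div]
    refine Finset.sum_congr rfl fun τ _ => ?_
    rw [hp' τ]; ring
  have key : ∑ σ : T, ∑ τ : T,
      (p σ * p τ) * ((f σ - f τ) * (Real.exp (f σ) - Real.exp (f τ)))
      = 2 * (C - Z * B) := by
    have expand : ∀ σ τ : T,
        (p σ * p τ) * ((f σ - f τ) * (Real.exp (f σ) - Real.exp (f τ)))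
        = (p σ * Real.exp (f σ) * f σ) * p τ
          - (p σ * f σ) * (p τ * Real.exp (f τ))
          - (p σ * Real.exp (f σ)) * (p τ * f τ)
          + p σ * (p τ * Real.exp (f τ) * f τ) := by
      intro σ τ; ring
    calc ∑ σ : T, ∑ τ : T,
        (p σ * p τ) * ((f σ - f τ) * (Real.exp (f σ) - Real.exp (f τ)))
        = ∑ σ : T, ((p σ * Real.exp (f σ) * f σ) * (∑ τ : T, p τ)
            - (p σ * f σ) * Z - (p σ * Real.exp (f σ)) * B + p σ * C) := by
          refine Finset.sum_congr rfl fun σ _ => ?_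
          simp only [expand, Finset.sum_add_distrib, Finset.sum_sub_distrib,
            ← Finset.mul_sum]
          rw [hZdef, hBdef, hCdef]
      _ = 2 * (C - Z * B) := by
          simp only [hp1, Finset.sum_add_distrib, Finset.sum_sub_distrib,
            ← Finset.sum_mul]
          rw [← hBdef, ← hZdef, ← hCdef]
          ring
  have hnn : ∀ σ τ : T,
      0 ≤ (p σ * p τ) * ((f σ - f τ) * (Real.exp (f σ) - Real.exp (f τ))) := by
    intro σ τ
    refine mul_nonneg (mul_nonneg (hp0 σ) (hp0 τ)) ?_
    rcases le_total (f σ) (f τ) with h | h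
    · have := Real.exp_le_exp.mpr h; nlinarith
    · have := Real.exp_le_exp.mpr h; nlinarith
  constructor
  · intro h
    rw [hL] at h
    have hC : C = B * Z := (div_eq_iff hZpos.ne').mp h
    have hsum0 : ∑ σ : T, ∑ τ : T,
        (p σ * p τ) * ((f σ - f τ) * (Real.exp (f σ) - Real.exp (f τ))) = 0 := by
      rw [key, hC]; ring
    have hterm : ∀ σ τ : T,
        (p σ * p τ) * ((f σ - f τ) * (Real.exp (f σ) - Real.exp (f τ))) = 0 := by
      intro σ τ
      have h1 := (Finset.sum_eq_zero_iff_of_nonneg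
        (fun σ _ => Finset.sum_nonneg fun τ _ => hnn σ τ)).mp hsum0 σ (Finset.mem_univ σ)
      exact (Finset.sum_eq_zero_iff_of_nonneg (fun τ _ => hnn σ τ)).mp h1 τ (Finset.mem_univ τ)
    refine ⟨f τ0, fun τ hτ => ?_⟩
    by_contra hne
    have hpp : 0 < p τ * p τ0 := mul_pos hτ hτ0
    have hpos : 0 < (f τ - f τ0) * (Real.exp (f τ) - Real.exp (f τ0)) := by
      rcases lt_or_gt_of_ne hne with hlt | hgt
      · exact mul_pos_of_neg_of_neg (by linarith)
          (by simpa using Real.exp_lt_exp.mpr hlt)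
      · exact mul_pos (by linarith) (by simpa using Real.exp_lt_exp.mpr hgt)
    have := mul_pos hpp hpos
    linarith [hterm τ τ0]
  · rintro ⟨c, hc⟩
    have hsum0 : ∑ σ : T, ∑ τ : T,
        (p σ * p τ) * ((f σ - f τ) * (Real.exp (f σ) - Real.exp (f τ))) = 0 := by
      refine Finset.sum_eq_zero fun σ _ => Finset.sum_eq_zero fun τ _ => ?_
      rcases eq_or_lt_of_le (hp0 σ) with hσ | hσ
      · rw [← hσ]; ring
      rcases eq_or_lt_of_le (hp0 τ) with hτ | hτ
      · rw [← hτ]; ring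
      rw [hc σ hσ, hc τ hτ]; ring
    have hC : C = Z * B := by
      rw [hsum0] at key; linarith
    rw [hL, hC]
    field_simp
end

section
/- Let T be a nonempty finite type, p_0 a probability mass function on T, and f : T → ℝ. Define the trajectory distribution iteration p_{k+1}(τ) = p_k(τ)·exp(f(τ)) / (Σ_σ p_k(σ)·exp(f(σ))). Then for every k ≥ 0 and every τ, the iterate has the closed form p_k(τ) = p_0(τ)·exp(k·f(τ)) / (Σ_σ p_0(σ)·exp(k·f(σ))). -/
open Real Finset

/-- Closed form of the trajectory distribution iteration
`p_{k+1}(τ) ∝ p_k(τ)·exp(f(τ))`: the `k`-th iterate is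
`p_k(τ) = p_0(τ)·exp(k·f(τ)) / Σ_σ p_0(σ)·exp(k·f(σ))`. -/
theorem trajectory_distribution_iteration_closed_form
    (T : Type*) [Fintype T] [Nonempty T]
    (p0 : T → ℝ) (hp0 : ∀ τ, 0 ≤ p0 τ) (hp1 : ∑ τ : T, p0 τ = 1)
    (f : T → ℝ)
    (p : ℕ → T → ℝ)
    (hinit : ∀ τ, p 0 τ = p0 τ)
    (hstep : ∀ k τ, p (k + 1) τ =
      p k τ * Real.exp (f τ) / (∑ σ : T, p k σ * Real.exp (f σ))) :
    ∀ k τ, p k τ =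
      p0 τ * Real.exp ((k : ℝ) * f τ) /
        (∑ σ : T, p0 σ * Real.exp ((k : ℝ) * f σ)) := by
  -- positivity of denominators
  obtain ⟨τ0, hτ0⟩ : ∃ τ : T, 0 < p0 τ := by
    by_contra h
    push_neg at h
    have : ∑ τ : T, p0 τ = 0 := le_antisymm
      (Finset.sum_nonpos fun τ _ => h τ) (Finset.sum_nonneg fun τ _ => hp0 τ)
    simp [hp1] at this
  have hS : ∀ c : ℝ, 0 < ∑ σ : T, p0 σ * Real.exp (c * f σ) := by
    intro c
    apply Finset.sum_pos' (fun σ _ => mul_nonneg (hp0 σ) (Real.exp_pos _).le)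
    exact ⟨τ0, Finset.mem_univ _, mul_pos hτ0 (Real.exp_pos _)⟩
  intro k
  induction k with
  | zero => intro τ; simp [hinit, hp1]
  | succ k ih =>
    intro τ
    have hSk := hS (k : ℝ)
    have hden : (∑ σ : T, p k σ * Real.exp (f σ)) =
        (∑ σ : T, p0 σ * Real.exp (((k : ℝ) + 1) * f σ)) /
          (∑ σ : T, p0 σ * Real.exp ((k : ℝ) * f σ)) := by
      rw [Finset.sum_div]
      apply Finset.sum_congr rfl
      intro σ _
      rw [ih σ]
      rw [add_mul, one_mul, Real.exp_add]
      ring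
    rw [hstep, ih τ, hden]
    push_cast
    simp only [add_mul, one_mul, Real.exp_add]
    have hS1 := hS ((k : ℝ) + 1)
    simp only [add_mul, one_mul, Real.exp_add] at hS1
    field_simp
end

section
/- Let T be a nonempty finite type, p_0 a probability mass function on T, and f : T → ℝ. Define p_k(τ) = p_0(τ)·exp(k·f(τ)) / (Σ_σ p_0(σ)·exp(k·f(σ))) for k ∈ ℕ. Then the sequence k ↦ E_{p_k}[f] = Σ_τ p_k(τ)·f(τ) is monotonically nondecreasing in k. -/
open Real Finset

lemma cheb_aux {T : Type*} [Fintype T] (w g : T → ℝ) (hw : ∀ τ, 0 ≤ w τ) :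
    (∑ τ : T, w τ * g τ) * (∑ σ : T, w σ * Real.exp (g σ)) ≤
      (∑ τ : T, w τ * g τ * Real.exp (g τ)) * (∑ σ : T, w σ) := by
  rw [← sub_nonneg]
  set D := (∑ τ : T, w τ * g τ * Real.exp (g τ)) * (∑ σ : T, w σ) -
      (∑ τ : T, w τ * g τ) * (∑ σ : T, w σ * Real.exp (g σ)) with hD
  have D1 : D = ∑ τ : T, ∑ σ : T,
      (w τ * g τ * Real.exp (g τ) * w σ - w τ * g τ * (w σ * Real.exp (g σ))) := by
    simp [hD, Finset.sum_mul_sum, ← Finset.sum_sub_distrib]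
  have D2 : D = ∑ τ : T, ∑ σ : T,
      (w σ * g σ * Real.exp (g σ) * w τ - w σ * g σ * (w τ * Real.exp (g τ))) := by
    rw [D1]; exact Finset.sum_comm
  have key : D + D = ∑ τ : T, ∑ σ : T,
      w τ * w σ * ((g τ - g σ) * (Real.exp (g τ) - Real.exp (g σ))) := by
    nth_rewrite 1 [D1]
    nth_rewrite 1 [D2]
    rw [← Finset.sum_add_distrib]
    refine Finset.sum_congr rfl fun τ _ => ?_
    rw [← Finset.sum_add_distrib]
    refine Finset.sum_congr rfl fun σ _ => ?_
    ring
  have hsum : 0 ≤ ∑ τ : T, ∑ σ : T,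
      w τ * w σ * ((g τ - g σ) * (Real.exp (g τ) - Real.exp (g σ))) := by
    refine Finset.sum_nonneg fun τ _ => Finset.sum_nonneg fun σ _ => ?_
    refine mul_nonneg (mul_nonneg (hw τ) (hw σ)) ?_
    rcases le_total (g τ) (g σ) with h | h
    · have h2 := Real.exp_le_exp.2 h
      nlinarith
    · exact mul_nonneg (by linarith) (by simpa using Real.exp_le_exp.2 h)
  linarith

/-- The expected value of `f` under the iterates
`p_k(τ) = p_0(τ)·exp(k·f(τ)) / Σ_σ p_0(σ)·exp(k·f(σ))` is monotonically
nondecreasing in `k`. -/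
theorem trajectory_iteration_expectation_monotone
    (T : Type*) [Fintype T] [Nonempty T]
    (p0 : T → ℝ) (hp0 : ∀ τ, 0 ≤ p0 τ) (hp1 : ∑ τ : T, p0 τ = 1)
    (f : T → ℝ)
    (p : ℕ → T → ℝ)
    (hp : ∀ k τ, p k τ =
      p0 τ * Real.exp ((k : ℝ) * f τ) /
        (∑ σ : T, p0 σ * Real.exp ((k : ℝ) * f σ))) :
    Monotone (fun k : ℕ => ∑ τ : T, p k τ * f τ) := by
  set w : ℕ → T → ℝ := fun k τ => p0 τ * Real.exp ((k : ℝ) * f τ) with hw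
  have hwnn : ∀ k τ, 0 ≤ w k τ := fun k τ =>
    mul_nonneg (hp0 τ) (Real.exp_nonneg _)
  have hS : ∀ k, 0 < ∑ σ : T, w k σ := by
    intro k
    obtain ⟨τ, hτ⟩ : ∃ τ, 0 < p0 τ := by
      by_contra h
      push_neg at h
      have : ∀ τ : T, p0 τ = 0 := fun τ => le_antisymm (h τ) (hp0 τ)
      simp [this] at hp1
    exact Finset.sum_pos' (fun σ _ => hwnn k σ)
      ⟨τ, Finset.mem_univ τ, mul_pos hτ (Real.exp_pos _)⟩
  have hE : ∀ k, (∑ τ : T, p k τ * f τ)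
      = (∑ τ : T, w k τ * f τ) / (∑ σ : T, w k σ) := by
    intro k
    rw [Finset.sum_div]
    exact Finset.sum_congr rfl fun τ _ => by rw [hp k τ]; ring
  apply monotone_nat_of_le_succ
  intro k
  simp only [hE]
  rw [div_le_div_iff₀ (hS k) (hS (k + 1))]
  have hw1 : ∀ τ, w (k + 1) τ = w k τ * Real.exp (f τ) := by
    intro τ
    simp only [hw]
    push_cast
    rw [show ((k : ℝ) + 1) * f τ = (k : ℝ) * f τ + f τ by ring, Real.exp_add]
    ring
  have := cheb_aux (w k) f (hwnn k)
  calc (∑ τ : T, w k τ * f τ) * ∑ σ : T, w (k + 1) σ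
      = (∑ τ : T, w k τ * f τ) * ∑ σ : T, w k σ * Real.exp (f σ) := by
        simp only [hw1]
    _ ≤ (∑ τ : T, w k τ * f τ * Real.exp (f τ)) * ∑ σ : T, w k σ := this
    _ = (∑ τ : T, w (k + 1) τ * f τ) * ∑ σ : T, w k σ := by
        congr 1
        exact Finset.sum_congr rfl fun τ _ => by rw [hw1]; ring
end

section
/- Let T be a nonempty finite type, p_0 a probability mass function on T, and f : T → ℝ. Define p_k(τ) = p_0(τ)·exp(k·f(τ)) / (Σ_σ p_0(σ)·exp(k·f(σ))) for k ∈ ℕ. Let m = max{f(τ) : p_0(τ) > 0} and A = {τ : p_0(τ) > 0 and f(τ) = m}. Then for every τ ∈ T, the limit lim_{k→∞} p_k(τ) exists and equals p_0(τ)/(Σ_{σ∈A} p_0(σ)) if τ ∈ A, and 0 otherwise. -/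
open Real Finset Filter Topology

/-- Convergence of the trajectory distribution iteration: the iterates
`p_k(τ) = p_0(τ)·exp(k·f(τ)) / Σ_σ p_0(σ)·exp(k·f(σ))` converge, as `k → ∞`,
to the distribution concentrated on the maximizers of `f` within the support
of `p_0`, with mass proportional to `p_0`. -/
theorem trajectory_iteration_converges
    (T : Type*) [Fintype T] [Nonempty T]
    (p0 : T → ℝ) (hp0 : ∀ τ, 0 ≤ p0 τ) (hp1 : ∑ τ : T, p0 τ = 1)
    (f : T → ℝ)
    (p : ℕ → T → ℝ)
    (hp : ∀ k τ, p k τ =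
      p0 τ * Real.exp ((k : ℝ) * f τ) /
        (∑ σ : T, p0 σ * Real.exp ((k : ℝ) * f σ)))
    (m : ℝ) (hm : IsGreatest (f '' {τ | 0 < p0 τ}) m) :
    ∀ τ : T, Filter.Tendsto (fun k : ℕ => p k τ) Filter.atTop
      (nhds (if 0 < p0 τ ∧ f τ = m then
        p0 τ / (∑ σ ∈ Finset.univ.filter (fun σ => 0 < p0 σ ∧ f σ = m), p0 σ)
      else 0)) := by
  set g : ℕ → T → ℝ := fun k σ => p0 σ * Real.exp ((k : ℝ) * (f σ - m)) with hg
  set L : T → ℝ := fun σ => if 0 < p0 σ ∧ f σ = m then p0 σ else 0 with hL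
  -- pointwise limit of g
  have hgL : ∀ σ, Tendsto (fun k : ℕ => g k σ) atTop (nhds (L σ)) := by
    intro σ
    rcases eq_or_lt_of_le (hp0 σ) with h0 | h0
    · have hL0 : L σ = 0 := by simp [hL, ← h0]
      rw [hL0]
      simpa [hg, ← h0] using (tendsto_const_nhds : Tendsto (fun _ : ℕ => (0:ℝ)) atTop (nhds 0))
    · have hle : f σ ≤ m := hm.2 ⟨σ, h0, rfl⟩
      rcases eq_or_lt_of_le hle with heq | hlt
      · have hLs : L σ = p0 σ := by simp [hL, h0, heq]
        rw [hLs]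
        simpa [hg, heq] using
          (tendsto_const_nhds : Tendsto (fun _ : ℕ => p0 σ) atTop (nhds (p0 σ)))
      · have : L σ = 0 := by simp [hL, hlt.ne]
        rw [this]
        have h1 : Tendsto (fun k : ℕ => (k : ℝ) * (f σ - m)) atTop atBot := by
          exact Tendsto.atTop_mul_const_of_neg (by linarith) tendsto_natCast_atTop_atTop
        have h2 : Tendsto (fun k : ℕ => Real.exp ((k : ℝ) * (f σ - m))) atTop (nhds 0) :=
          Real.tendsto_exp_atBot.comp h1
        simpa using h2.const_mul (p0 σ)
  -- the limit sum S
  set S : ℝ := ∑ σ ∈ Finset.univ.filter (fun σ => 0 < p0 σ ∧ f σ = m), p0 σ with hS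
  have hsumL : ∑ σ : T, L σ = S := by
    rw [hS, Finset.sum_filter]
  obtain ⟨τ0, hτ0, hfτ0⟩ := hm.1
  have hSpos : 0 < S := by
    rw [hS]
    apply Finset.sum_pos
    · intro i hi
      exact (Finset.mem_filter.mp hi).2.1
    · exact ⟨τ0, Finset.mem_filter.mpr ⟨Finset.mem_univ _, hτ0, hfτ0⟩⟩
  have hden : Tendsto (fun k : ℕ => ∑ σ : T, g k σ) atTop (nhds S) := by
    rw [← hsumL]
    exact tendsto_finset_sum _ fun σ _ => hgL σ
  intro τ
  -- rewrite p k τ as g k τ / sum g k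
  have hrw : ∀ k : ℕ, p k τ = g k τ / ∑ σ : T, g k σ := by
    intro k
    rw [hp k τ]
    have h1 : ∀ σ, p0 σ * Real.exp ((k : ℝ) * f σ)
        = Real.exp ((k : ℝ) * m) * (p0 σ * Real.exp ((k : ℝ) * (f σ - m))) := by
      intro σ
      rw [mul_sub, Real.exp_sub]
      have := Real.exp_pos ((k : ℝ) * m)
      field_simp
    simp only [h1, ← Finset.mul_sum, hg]
    rw [mul_div_mul_left _ _ (Real.exp_pos _).ne']
  have hlim : Tendsto (fun k : ℕ => g k τ / ∑ σ : T, g k σ) atTop (nhds (L τ / S)) :=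
    (hgL τ).div hden hSpos.ne'
  have : (if 0 < p0 τ ∧ f τ = m then p0 τ / S else 0) = L τ / S := by
    by_cases h : 0 < p0 τ ∧ f τ = m <;> simp [hL, h]
  rw [this]
  simpa only [hrw] using hlim
end

section
/- Let T be a nonempty finite type and let p, q be probability mass functions on T with p(τ) > 0 and q(τ) > 0 for all τ. Define the generator loss L_G(q) = Σ_τ q(τ)·(log(1 − D*(τ)) − log D*(τ)) with D*(τ) = p(τ)/(p(τ) + q(τ)). Then L_G(q) ≥ 0, with equality if and only if q = p. Hence the generator loss at the optimal discriminator is minimized exactly when the generator distribution q equals the data distribution p. -/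
open Real Finset

/-- The generator loss at the optimal discriminator is nonnegative and vanishes iff
the generator distribution `q` equals the data distribution `p`. -/
theorem generator_loss_nonneg_eq_zero_iff
    (T : Type*) [Fintype T] [Nonempty T]
    (p q : T → ℝ)
    (hp0 : ∀ τ, 0 < p τ) (hp1 : ∑ τ : T, p τ = 1)
    (hq0 : ∀ τ, 0 < q τ) (hq1 : ∑ τ : T, q τ = 1)
    (Dstar : T → ℝ) (hD : ∀ τ, Dstar τ = p τ / (p τ + q τ)) :
    0 ≤ ∑ τ : T, q τ * (Real.log (1 - Dstar τ) - Real.log (Dstar τ)) ∧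
    (∑ τ : T, q τ * (Real.log (1 - Dstar τ) - Real.log (Dstar τ)) = 0 ↔ q = p) := by
  have hpq : ∀ τ, 0 < p τ + q τ := fun τ => add_pos (hp0 τ) (hq0 τ)
  have hterm : ∀ τ, q τ * (Real.log (1 - Dstar τ) - Real.log (Dstar τ))
      = -(q τ * Real.log (p τ / q τ)) := by
    intro τ
    have h1 : 1 - Dstar τ = q τ / (p τ + q τ) := by
      have hne := (hpq τ).ne'
      rw [hD τ]; field_simp; ring
    rw [h1, hD τ, Real.log_div (hq0 τ).ne' (hpq τ).ne',
      Real.log_div (hp0 τ).ne' (hpq τ).ne',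
      Real.log_div (hp0 τ).ne' (hq0 τ).ne']
    ring
  have hbound : ∀ τ, q τ * Real.log (p τ / q τ) ≤ p τ - q τ := by
    intro τ
    have h := Real.log_le_sub_one_of_pos (div_pos (hp0 τ) (hq0 τ))
    have := mul_le_mul_of_nonneg_left h (hq0 τ).le
    calc q τ * Real.log (p τ / q τ) ≤ q τ * (p τ / q τ - 1) := this
      _ = p τ - q τ := by have hne := (hq0 τ).ne'; field_simp
  have hstrict : ∀ τ, p τ ≠ q τ → q τ * Real.log (p τ / q τ) < p τ - q τ := by
    intro τ hne
    have hx : p τ / q τ ≠ 1 := by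
      intro h
      exact hne ((div_eq_one_iff_eq (hq0 τ).ne').mp h)
    have h := Real.log_lt_sub_one_of_pos (div_pos (hp0 τ) (hq0 τ)) hx
    have := mul_lt_mul_of_pos_left h (hq0 τ)
    calc q τ * Real.log (p τ / q τ) < q τ * (p τ / q τ - 1) := this
      _ = p τ - q τ := by have hne := (hq0 τ).ne'; field_simp
  have hsum : ∑ τ : T, q τ * Real.log (p τ / q τ) ≤ 0 := by
    calc ∑ τ : T, q τ * Real.log (p τ / q τ) ≤ ∑ τ : T, (p τ - q τ) :=
        Finset.sum_le_sum fun τ _ => hbound τ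
      _ = 0 := by rw [Finset.sum_sub_distrib, hp1, hq1]; ring
  have hrw : ∑ τ : T, q τ * (Real.log (1 - Dstar τ) - Real.log (Dstar τ))
      = -∑ τ : T, q τ * Real.log (p τ / q τ) := by
    rw [← Finset.sum_neg_distrib]
    exact Finset.sum_congr rfl fun τ _ => hterm τ
  rw [hrw]
  constructor
  · linarith
  · constructor
    · intro h
      by_contra hne
      obtain ⟨τ0, hτ0⟩ : ∃ τ, q τ ≠ p τ := by
        by_contra hall
        push_neg at hall
        exact hne (funext hall)
      have hlt : ∑ τ : T, q τ * Real.log (p τ / q τ) < 0 := by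
        calc ∑ τ : T, q τ * Real.log (p τ / q τ) < ∑ τ : T, (p τ - q τ) :=
            Finset.sum_lt_sum (fun τ _ => hbound τ)
              ⟨τ0, Finset.mem_univ τ0, hstrict τ0 (Ne.symm hτ0)⟩
          _ = 0 := by rw [Finset.sum_sub_distrib, hp1, hq1]; ring
      linarith
    · intro h
      subst h
      have : ∀ τ : T, q τ * Real.log (q τ / q τ) = 0 := fun τ => by
        rw [div_self (hq0 τ).ne', Real.log_one, mul_zero]
      simp [this]
end

section
/- Let T be a nonempty finite type and let p_data and q be probability mass functions on T with p_data(τ) > 0 and q(τ) > 0 for all τ. For any pmf p on T with p(τ) > 0 for all τ, define the discriminator loss L_D(p) = −Σ_τ [ p_data(τ)·log(p(τ)/(p(τ)+q(τ))) + q(τ)·log(q(τ)/(p(τ)+q(τ))) ]. Then L_D(p) ≥ L_D(p_data) for every such pmf p; i.e., among discriminators of the form D(τ) = p(τ)/(p(τ)+q(τ)) parameterized by a density p, the binary cross-entropy discriminator loss is minimized at p = p_data. -/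
open Real Finset

lemma pointwise_disc_bound (a b c : ℝ) (ha : 0 < a) (hb : 0 < b) (hc : 0 < c) :
    a * Real.log (c / (c + b)) + b * Real.log (b / (c + b))
      ≤ a * Real.log (a / (a + b)) + b * Real.log (b / (a + b)) := by
  have hab : 0 < a + b := by linarith
  have hcb : 0 < c + b := by linarith
  have e1 : (c / (c + b)) / (a / (a + b)) = c * (a + b) / (a * (c + b)) := by
    field_simp
  have e2 : (b / (c + b)) / (b / (a + b)) = (a + b) / (c + b) := by
    field_simp
  have h1 := Real.log_le_sub_one_of_pos (x := (c / (c + b)) / (a / (a + b))) (by positivity)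
  have h2 := Real.log_le_sub_one_of_pos (x := (b / (c + b)) / (b / (a + b))) (by positivity)
  rw [Real.log_div (by positivity) (by positivity), e1] at h1
  rw [Real.log_div (by positivity) (by positivity), e2] at h2
  have H1 := mul_le_mul_of_nonneg_left h1 ha.le
  have H2 := mul_le_mul_of_nonneg_left h2 hb.le
  rw [mul_sub] at H1 H2
  have hz : a * (c * (a + b) / (a * (c + b)) - 1) + b * ((a + b) / (c + b) - 1) = 0 := by
    field_simp; ring
  linarith

/-- Theorem 2 (finite-distribution content): among structured discriminators
`D(τ) = p(τ)/(p(τ)+q(τ))` parameterized by a positive pmf `p`, the binary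
cross-entropy discriminator loss is minimized at `p = p_data`. -/
theorem structured_discriminator_loss_minimized_at_data
    (T : Type*) [Fintype T] [Nonempty T]
    (pdata q : T → ℝ)
    (hpdata0 : ∀ τ, 0 < pdata τ) (hpdata1 : ∑ τ : T, pdata τ = 1)
    (hq0 : ∀ τ, 0 < q τ) (hq1 : ∑ τ : T, q τ = 1)
    (p : T → ℝ) (hp0 : ∀ τ, 0 < p τ) (hp1 : ∑ τ : T, p τ = 1) :
    -(∑ τ : T, (pdata τ * Real.log (pdata τ / (pdata τ + q τ))
        + q τ * Real.log (q τ / (pdata τ + q τ))))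
      ≤ -(∑ τ : T, (pdata τ * Real.log (p τ / (p τ + q τ))
        + q τ * Real.log (q τ / (p τ + q τ)))) := by
  apply neg_le_neg
  apply Finset.sum_le_sum
  intro τ _
  exact pointwise_disc_bound (pdata τ) (q τ) (p τ) (hpdata0 τ) (hq0 τ) (hp0 τ)
end

section
/- Let T be a nonempty finite type and let p be a probability mass function on T with p(τ) > 0 for all τ. For a pmf q on T with q(τ) > 0 for all τ, define V(q) = Σ_τ [ p(τ)·log(p(τ)/(p(τ)+q(τ))) + q(τ)·log(q(τ)/(p(τ)+q(τ))) ]. Then V(q) ≥ −log 4, with equality if and only if q = p. -/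
open Real Finset

private lemma gibbs_term_le {a b : ℝ} (ha : 0 < a) (hb : 0 < b) :
    a * Real.log (b / a) ≤ b - a := by
  have h := Real.log_le_sub_one_of_pos (div_pos hb ha)
  have h2 : a * (b / a - 1) = b - a := by field_simp
  nlinarith [mul_le_mul_of_nonneg_left h ha.le]

private lemma gibbs_term_lt {a b : ℝ} (ha : 0 < a) (hb : 0 < b) (hne : b ≠ a) :
    a * Real.log (b / a) < b - a := by
  have hba : b / a ≠ 1 := by
    intro h; exact hne (by field_simp at h; linarith)
  have h := Real.log_lt_sub_one_of_pos (div_pos hb ha) hba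
  have h2 : a * (b / a - 1) = b - a := by field_simp
  nlinarith [mul_lt_mul_of_pos_left h ha]

private lemma gibbs_le {T : Type*} [Fintype T] (a b : T → ℝ)
    (ha : ∀ τ, 0 < a τ) (hb : ∀ τ, 0 < b τ) :
    ∑ τ : T, a τ * Real.log (b τ / a τ) ≤ ∑ τ : T, b τ - ∑ τ : T, a τ := by
  rw [← Finset.sum_sub_distrib]
  exact Finset.sum_le_sum fun τ _ => gibbs_term_le (ha τ) (hb τ)

private lemma gibbs_lt {T : Type*} [Fintype T] (a b : T → ℝ)
    (ha : ∀ τ, 0 < a τ) (hb : ∀ τ, 0 < b τ) (τ0 : T) (hne : b τ0 ≠ a τ0) :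
    ∑ τ : T, a τ * Real.log (b τ / a τ) < ∑ τ : T, b τ - ∑ τ : T, a τ := by
  rw [← Finset.sum_sub_distrib]
  exact Finset.sum_lt_sum (fun τ _ => gibbs_term_le (ha τ) (hb τ))
    ⟨τ0, Finset.mem_univ τ0, gibbs_term_lt (ha τ0) (hb τ0) hne⟩

/-- Finite-distribution GAN lemma: the GAN value at the optimal discriminator,
`V(q) = Σ_τ [p(τ)·log(p/(p+q)) + q(τ)·log(q/(p+q))]`, satisfies `V(q) ≥ −log 4`,
with equality iff the generator distribution `q` equals the data distribution `p`. -/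
theorem gan_value_ge_neg_log_four
    (T : Type*) [Fintype T] [Nonempty T]
    (p : T → ℝ) (hp0 : ∀ τ, 0 < p τ) (hp1 : ∑ τ : T, p τ = 1)
    (q : T → ℝ) (hq0 : ∀ τ, 0 < q τ) (hq1 : ∑ τ : T, q τ = 1) :
    -Real.log 4
        ≤ ∑ τ : T, (p τ * Real.log (p τ / (p τ + q τ))
            + q τ * Real.log (q τ / (p τ + q τ))) ∧
    (∑ τ : T, (p τ * Real.log (p τ / (p τ + q τ))
            + q τ * Real.log (q τ / (p τ + q τ))) = -Real.log 4 ↔ q = p) := by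
  set m : T → ℝ := fun τ => (p τ + q τ) / 2 with hm
  have hm0 : ∀ τ, 0 < m τ := fun τ => by
    have := hp0 τ; have := hq0 τ; simp only [hm]; linarith
  have hmsum : ∑ τ : T, m τ = 1 := by
    simp only [hm]
    rw [← Finset.sum_div, Finset.sum_add_distrib, hp1, hq1]
    norm_num
  set A : ℝ := ∑ τ : T, p τ * Real.log (m τ / p τ) with hA
  set B : ℝ := ∑ τ : T, q τ * Real.log (m τ / q τ) with hB
  have hlog4 : Real.log 4 = 2 * Real.log 2 := by
    rw [show (4:ℝ) = 2^2 by norm_num, Real.log_pow]; push_cast; ring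
  have h1 : ∑ τ : T, (p τ + q τ) * Real.log 2 = Real.log 4 := by
    rw [← Finset.sum_mul, Finset.sum_add_distrib, hp1, hq1, hlog4]; ring
  -- key decomposition: S = -A - B - log 4
  have hkey : ∑ τ : T, (p τ * Real.log (p τ / (p τ + q τ))
      + q τ * Real.log (q τ / (p τ + q τ))) = -A - B - Real.log 4 := by
    have hterm : ∀ τ : T, p τ * Real.log (p τ / (p τ + q τ))
        + q τ * Real.log (q τ / (p τ + q τ))
        = -(p τ * Real.log (m τ / p τ)) + -(q τ * Real.log (m τ / q τ))
          + -((p τ + q τ) * Real.log 2) := by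
      intro τ
      have hpτ := (hp0 τ).ne'
      have hqτ := (hq0 τ).ne'
      have hpq : p τ + q τ ≠ 0 := by have := hp0 τ; have := hq0 τ; positivity
      have hm2 : (p τ + q τ) / 2 ≠ 0 := by
        have := hp0 τ; have := hq0 τ; positivity
      simp only [hm]
      rw [Real.log_div hpτ hpq, Real.log_div hqτ hpq,
        Real.log_div hm2 hpτ, Real.log_div hm2 hqτ,
        Real.log_div hpq (by norm_num : (2:ℝ) ≠ 0)]
      ring
    rw [Finset.sum_congr rfl fun τ _ => hterm τ, Finset.sum_add_distrib,
      Finset.sum_add_distrib, Finset.sum_neg_distrib, Finset.sum_neg_distrib,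
      Finset.sum_neg_distrib, ← hA, ← hB, h1]
    ring
  have hAle : A ≤ 0 := by
    have := gibbs_le p m hp0 hm0
    rw [hmsum, hp1] at this; linarith [this]
  have hBle : B ≤ 0 := by
    have := gibbs_le q m hq0 hm0
    rw [hmsum, hq1] at this; linarith [this]
  constructor
  · rw [hkey]; linarith
  · constructor
    · intro h
      by_contra hne
      obtain ⟨τ0, hτ0⟩ := Function.ne_iff.mp hne
      have hmne : m τ0 ≠ p τ0 := by
        simp only [hm]; intro hc; apply hτ0; linarith
      have hAlt : A < 0 := by
        have := gibbs_lt p m hp0 hm0 τ0 hmne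
        rw [hmsum, hp1] at this; linarith [this]
      rw [hkey] at h
      have : A + B = 0 := by linarith
      linarith
    · intro h
      subst h
      have hmq : ∀ τ, m τ = q τ := fun τ => by simp only [hm]; ring
      have hA0 : A = 0 := by
        rw [hA]
        apply Finset.sum_eq_zero
        intro τ _
        rw [hmq τ, div_self (hq0 τ).ne', Real.log_one, mul_zero]
      have hB0 : B = 0 := by
        rw [hB]
        apply Finset.sum_eq_zero
        intro τ _
        rw [hmq τ, div_self (hq0 τ).ne', Real.log_one, mul_zero]
      rw [hkey, hA0, hB0]; ring
end
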